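/- Let x be a q-ary string of length n and k a positive integer with n - k + 1 > 2q^k + (k^2/2)·q^{k/2}. Then x can be written as x = a·b·c·b·d where a, c, d are (possibly empty) strings and b is a string of length at least k, i.e., x contains two non-overlapping occurrences of the same string of length at least k. -/

import Mathlib

open scoped BigOperators

/-- One duplication-with-transposition step: `x = a·b·c·d → y = a·b·c·b·d`, `b` non-empty. -/
def DupStep {q : ℕ} (x y : List (Fin q)) : Prop :=
  ∃ a b c d : List (Fin q), b ≠ [] ∧ x = a ++ b ++ c ++ d ∧ y = a ++ b ++ c ++ b ++ d

/-- `DupPath m x y` : `y` is obtained from `x` by exactly `m` duplication steps. -/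
def DupPath {q : ℕ} : ℕ → List (Fin q) → List (Fin q) → Prop
  | 0, x, y => x = y
  | n + 1, x, y => ∃ z, DupStep x z ∧ DupPath n z y

/-- Hamming distance between two lists (of equal length in intended use). -/
def listHammingDist {q : ℕ} (b b' : List (Fin q)) : ℕ :=
  ((b.zip b').filter fun p => decide (p.1 ≠ p.2)).length

/-- One β-approximate duplication-with-transposition step. -/
def ApproxStep {q : ℕ} (β : ℝ) (x y : List (Fin q)) : Prop :=
  ∃ a b c bh d : List (Fin q), b ≠ [] ∧ bh.length = b.length ∧
    (listHammingDist b bh : ℝ) ≤ β * b.length ∧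
    x = a ++ b ++ c ++ d ∧ y = a ++ b ++ c ++ bh ++ d

/-- `ApproxPath β m x y` : `y` obtained from `x` by exactly `m` β-approximate duplications. -/
def ApproxPath {q : ℕ} (β : ℝ) : ℕ → List (Fin q) → List (Fin q) → Prop
  | 0, x, y => x = y
  | n + 1, x, y => ∃ z, ApproxStep β x z ∧ ApproxPath β n z y

/-- The root of a string: the subsequence of first occurrences of symbols. -/
def firstOccs {q : ℕ} (l : List (Fin q)) : List (Fin q) :=
  l.foldl (fun acc a => if a ∈ acc then acc else acc ++ [a]) []

namespace Stmt3Aux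

variable {q : ℕ}

/-- The window of length `k` starting at `i`, read with default `d0`. -/
def win (x : List (Fin q)) (d0 : Fin q) (k i : ℕ) : Fin k → Fin q :=
  fun a => x.getD (i + a) d0

def HasPeriod {k : ℕ} (f : Fin k → Fin q) (p : ℕ) : Prop :=
  ∀ a : ℕ, ∀ h : a + p < k, f ⟨a + p, h⟩ = f ⟨a, lt_of_le_of_lt (Nat.le_add_right a p) h⟩

lemma hasPeriod_of_win_eq {x : List (Fin q)} {d0 : Fin q} {k i j : ℕ} (hij : i ≤ j)
    (hw : win x d0 k i = win x d0 k j) : HasPeriod (win x d0 k i) (j - i) := by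
  intro a h
  have h2 : i + (a + (j - i)) = j + a := by omega
  show x.getD (i + (a + (j - i))) d0 = _
  rw [h2]
  have : win x d0 k j ⟨a, by omega⟩ = win x d0 k i ⟨a, by omega⟩ := by rw [hw]
  exact this

lemma eq_of_period {k p : ℕ} {f g : Fin k → Fin q} (hp : 0 < p)
    (hf : HasPeriod f p) (hg : HasPeriod g p)
    (hfg : ∀ b : ℕ, b < p → ∀ hbk : b < k, f ⟨b, hbk⟩ = g ⟨b, hbk⟩) : f = g := by
  suffices H : ∀ a : ℕ, ∀ ha : a < k, f ⟨a, ha⟩ = g ⟨a, ha⟩ by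
    funext b; exact H b.1 b.2
  intro a
  induction a using Nat.strong_induction_on with
  | _ a ih =>
    intro ha
    by_cases hap : a < p
    · exact hfg a hap ha
    · have h1 : (a - p) + p < k := by omega
      have e1 := hf (a - p) h1
      have e2 := hg (a - p) h1
      have e : (⟨a, ha⟩ : Fin k) = ⟨a - p + p, h1⟩ := by
        apply Fin.ext; simp; omega
      rw [e, e1, e2, ih (a - p) (by omega)]

def SmallPer (k : ℕ) (f : Fin k → Fin q) : Prop :=
  ∃ p, 0 < p ∧ p ≤ k / 2 ∧ HasPeriod f p

open Classical in
noncomputable def enc (k : ℕ) (f : Fin k → Fin q) : Σ p : ℕ, (Fin p → Fin q) :=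
  if hf : SmallPer k f then
    ⟨Nat.find hf, fun b => f ⟨b.1, by
      have hs := Nat.find_spec hf
      have := b.2
      omega⟩⟩
  else ⟨0, Fin.elim0⟩

open Classical in
lemma card_smallPer (k : ℕ) :
    (Finset.univ.filter (fun f : Fin k → Fin q => SmallPer k f)).card
      ≤ ∑ p ∈ Finset.Icc 1 (k / 2), q ^ p := by
  classical
  have hcard : ∑ p ∈ Finset.Icc 1 (k / 2), q ^ p
      = ((Finset.Icc 1 (k / 2)).sigma
          (fun p => (Finset.univ : Finset (Fin p → Fin q)))).card := by
    rw [Finset.card_sigma]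
    refine Finset.sum_congr rfl fun p _ => ?_
    simp [Fintype.card_fun]
  rw [hcard]
  refine Finset.card_le_card_of_injOn (enc k) ?_ ?_
  · intro f hf
    simp only [Finset.coe_filter, Set.mem_setOf_eq, Finset.mem_coe] at hf ⊢
    rw [enc, dif_pos hf.2]
    have hs := Nat.find_spec hf.2
    simp only [Finset.mem_sigma, Finset.mem_Icc, Finset.mem_univ, and_true]
    omega
  · intro f hf g hg hfg
    simp only [Finset.coe_filter, Set.mem_setOf_eq] at hf hg
    rw [enc, dif_pos hf.2, enc, dif_pos hg.2] at hfg
    obtain ⟨hp, hfun⟩ := Sigma.mk.inj_iff.mp hfg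
    have hsf := Nat.find_spec hf.2
    have hsg := Nat.find_spec hg.2
    have hgper : HasPeriod g (Nat.find hf.2) := by rw [hp]; exact hsg.2.2
    refine eq_of_period (p := Nat.find hf.2) hsf.1 hsf.2.2 hgper ?_
    intro b hb hbk
    have := (Fin.heq_fun_iff hp).mp hfun ⟨b, hb⟩
    exact this

lemma three_sorted {S : Finset ℕ} (h : 2 < S.card) :
    ∃ i j l, i ∈ S ∧ j ∈ S ∧ l ∈ S ∧ i < j ∧ j < l := by
  have h1 : S.Nonempty := Finset.card_pos.mp (by omega)
  set i := S.min' h1 with hi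
  have hiS := S.min'_mem h1
  set S2 := S.erase i with hS2
  have hc2 : 1 < S2.card := by
    rw [hS2, Finset.card_erase_of_mem hiS]; omega
  have h2 : S2.Nonempty := Finset.card_pos.mp (by omega)
  set j := S2.min' h2 with hj
  have hjS2 := S2.min'_mem h2
  set S3 := S2.erase j with hS3
  have h3 : S3.Nonempty := Finset.card_pos.mp (by
    rw [hS3, Finset.card_erase_of_mem hjS2]; omega)
  obtain ⟨l, hlS3⟩ := h3
  have hjS : j ∈ S := Finset.mem_of_mem_erase hjS2
  have hlS2 : l ∈ S2 := Finset.mem_of_mem_erase hlS3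
  have hlS : l ∈ S := Finset.mem_of_mem_erase hlS2
  refine ⟨i, j, l, hiS, hjS, hlS, ?_, ?_⟩
  · exact lt_of_le_of_ne (S.min'_le j hjS) (Finset.ne_of_mem_erase hjS2).symm
  · exact lt_of_le_of_ne (S2.min'_le l hlS2) (Finset.ne_of_mem_erase hlS3).symm

lemma reconstruct {x : List (Fin q)} {d0 : Fin q} {k i j : ℕ}
    (hk : 0 < k) (hij : i + k ≤ j) (hj : j + k ≤ x.length)
    (hw : win x d0 k i = win x d0 k j) :
    ∃ a b c d : List (Fin q), x = a ++ b ++ c ++ b ++ d ∧ k ≤ b.length := by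
  have hi : i + k ≤ x.length := by omega
  refine ⟨x.take i, (x.drop i).take k, (x.drop (i + k)).take (j - (i + k)),
    x.drop (j + k), ?_, ?_⟩
  · have hbb : (x.drop i).take k = (x.drop j).take k := by
      apply List.ext_getElem
      · simp; omega
      · intro a h1 h2
        have ha : a < k := by simp at h1; omega
        rw [List.getElem_take, List.getElem_drop, List.getElem_take, List.getElem_drop]
        have e1 : x[i + a] = win x d0 k i ⟨a, ha⟩ := by
          show _ = x.getD (i + a) d0
          rw [List.getD_eq_getElem x d0 (by omega)]
        have e2 : x[j + a]'(by omega) = win x d0 k j ⟨a, ha⟩ := by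
          show _ = x.getD (j + a) d0
          rw [List.getD_eq_getElem x d0 (by omega)]
        rw [e1, e2, hw]
    calc x = x.take i ++ x.drop i := (List.take_append_drop i x).symm
      _ = x.take i ++ ((x.drop i).take k ++ (x.drop i).drop k) := by
          conv_lhs => rw [← List.take_append_drop k (x.drop i)]
      _ = x.take i ++ ((x.drop i).take k ++ x.drop (i + k)) := by
          rw [List.drop_drop]
      _ = x.take i ++ ((x.drop i).take k ++
            ((x.drop (i + k)).take (j - (i + k)) ++ (x.drop (i + k)).drop (j - (i + k)))) := by
          conv_lhs => rw [← List.take_append_drop (j - (i + k)) (x.drop (i + k))]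
      _ = x.take i ++ ((x.drop i).take k ++
            ((x.drop (i + k)).take (j - (i + k)) ++ x.drop j)) := by
          rw [List.drop_drop]; congr 4; omega
      _ = x.take i ++ ((x.drop i).take k ++
            ((x.drop (i + k)).take (j - (i + k)) ++ ((x.drop j).take k ++ (x.drop j).drop k))) := by
          conv_lhs => rw [← List.take_append_drop k (x.drop j)]
      _ = x.take i ++ ((x.drop i).take k ++
            ((x.drop (i + k)).take (j - (i + k)) ++ ((x.drop i).take k ++ x.drop (j + k)))) := by
          rw [List.drop_drop, hbb]
      _ = x.take i ++ (x.drop i).take k ++ (x.drop (i + k)).take (j - (i + k)) ++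
            (x.drop i).take k ++ x.drop (j + k) := by simp [List.append_assoc]
  · simp; omega

end Stmt3Aux

/-- Lemma 1: if `n - k + 1 > 2q^k + (k²/2)q^{k/2}` then a `q`-ary
string of length `n` contains two non-overlapping equal substrings of length ≥ k. -/
theorem stmt3 (q k n : ℕ) (hq : 1 ≤ q) (hk : 0 < k) (x : List (Fin q))
    (hn : x.length = n)
    (h : (2 : ℝ) * (q : ℝ) ^ k + ((k : ℝ) ^ 2 / 2) * (q : ℝ) ^ ((k : ℝ) / 2)
        < (n : ℝ) - (k : ℝ) + 1) :
    ∃ a b c d : List (Fin q), x = a ++ b ++ c ++ b ++ d ∧ k ≤ b.length := by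
  classical
  by_contra hcon
  -- basic real facts
  have hq1 : (1 : ℝ) ≤ (q : ℝ) := by exact_mod_cast hq
  have hqk : (2 : ℝ) ≤ 2 * (q : ℝ) ^ k := by
    nlinarith [one_le_pow₀ (n := k) hq1]
  have hA0 : (0:ℝ) ≤ ((k : ℝ) ^ 2 / 2) * (q : ℝ) ^ ((k : ℝ) / 2) := by
    apply mul_nonneg
    · positivity
    · exact Real.rpow_nonneg (by linarith) _
  have hkn : k + 1 ≤ n := by
    by_contra hc
    push_neg at hc
    have : (n:ℝ) ≤ (k:ℝ) := by exact_mod_cast Nat.lt_succ_iff.mp hc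
    linarith
  set d0 : Fin q := ⟨0, hq⟩ with hd0
  set N := n - k + 1 with hN
  have H2 : ∀ i j : ℕ, j + k ≤ n → i + k ≤ j → Stmt3Aux.win x d0 k i ≠ Stmt3Aux.win x d0 k j := by
    intro i j hj hij hw
    exact hcon (Stmt3Aux.reconstruct hk hij (by rw [hn]; exact hj) hw)
  set T : (Fin k → Fin q) → Finset ℕ :=
    fun f => (Finset.range N).filter (fun i => Stmt3Aux.win x d0 k i = f) with hT
  have hmemT : ∀ f i, i ∈ T f → i + k ≤ n ∧ Stmt3Aux.win x d0 k i = f := by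
    intro f i hi
    simp only [hT, Finset.mem_filter, Finset.mem_range] at hi
    exact ⟨by omega, hi.2⟩
  have claim1 : ∀ f, (T f).card ≤ k := by
    intro f
    rcases (T f).eq_empty_or_nonempty with he | hne
    · rw [he]; simp
    · set m := (T f).min' hne with hm
      have hmT := (T f).min'_mem hne
      have hsub : T f ⊆ Finset.Icc m (m + k - 1) := by
        intro j hj
        have h1 : m ≤ j := (T f).min'_le j hj
        have hjn := hmemT f j hj
        have hmn := hmemT f m hmT
        rw [Finset.mem_Icc]
        refine ⟨h1, ?_⟩
        by_contra hc
        push_neg at hc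
        exact H2 m j hjn.1 (by omega) (by rw [hjn.2, hmn.2])
      calc (T f).card ≤ (Finset.Icc m (m + k - 1)).card := Finset.card_le_card hsub
        _ = k := by rw [Nat.card_Icc]; omega
  have claim2 : ∀ f, ¬ Stmt3Aux.SmallPer k f → (T f).card ≤ 2 := by
    intro f hsp
    by_contra hc
    push_neg at hc
    obtain ⟨i, j, l, hi, hj, hl, hij, hjl⟩ := Stmt3Aux.three_sorted hc
    obtain ⟨hin, hwi⟩ := hmemT f i hi
    obtain ⟨hjn, hwj⟩ := hmemT f j hj
    obtain ⟨hln, hwl⟩ := hmemT f l hl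
    have hlik : l < i + k := by
      by_contra hck
      push_neg at hck
      exact H2 i l hln (by omega) (by rw [hwi, hwl])
    have hp1 : Stmt3Aux.HasPeriod f (j - i) := by
      rw [← hwi]
      exact Stmt3Aux.hasPeriod_of_win_eq (le_of_lt hij) (by rw [hwi, hwj])
    have hp2 : Stmt3Aux.HasPeriod f (l - j) := by
      rw [← hwj]
      exact Stmt3Aux.hasPeriod_of_win_eq (le_of_lt hjl) (by rw [hwj, hwl])
    apply hsp
    by_cases hcase : j - i ≤ k / 2
    · exact ⟨j - i, by omega, hcase, hp1⟩
    · exact ⟨l - j, by omega, by omega, hp2⟩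
  have hNsum : N = ∑ f : Fin k → Fin q, (T f).card := by
    have := Finset.card_eq_sum_card_fiberwise
      (f := fun i => Stmt3Aux.win x d0 k i) (s := Finset.range N) (t := Finset.univ)
      (fun i _ => Finset.mem_univ _)
    simpa [hT] using this
  set m := k / 2 with hmdef
  have hsplit := Finset.sum_filter_add_sum_filter_not Finset.univ
    (fun f : Fin k → Fin q => Stmt3Aux.SmallPer k f) (fun f => (T f).card)
  have hb1 : ∑ f ∈ Finset.univ.filter (fun f : Fin k → Fin q => Stmt3Aux.SmallPer k f), (T f).card
      ≤ k * ∑ p ∈ Finset.Icc 1 m, q ^ p := by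
    calc ∑ f ∈ Finset.univ.filter (fun f : Fin k → Fin q => Stmt3Aux.SmallPer k f), (T f).card
        ≤ (Finset.univ.filter (fun f : Fin k → Fin q => Stmt3Aux.SmallPer k f)).card • k :=
        Finset.sum_le_card_nsmul _ _ k (fun f _ => claim1 f)
      _ = (Finset.univ.filter (fun f : Fin k → Fin q => Stmt3Aux.SmallPer k f)).card * k := smul_eq_mul _ _
      _ ≤ (∑ p ∈ Finset.Icc 1 m, q ^ p) * k := Nat.mul_le_mul_right k (Stmt3Aux.card_smallPer k)
      _ = k * ∑ p ∈ Finset.Icc 1 m, q ^ p := Nat.mul_comm _ _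
  have hb2 : ∑ f ∈ Finset.univ.filter (fun f : Fin k → Fin q => ¬ Stmt3Aux.SmallPer k f), (T f).card
      ≤ 2 * q ^ k := by
    calc ∑ f ∈ Finset.univ.filter (fun f : Fin k → Fin q => ¬ Stmt3Aux.SmallPer k f), (T f).card
        ≤ (Finset.univ.filter (fun f : Fin k → Fin q => ¬ Stmt3Aux.SmallPer k f)).card • 2 :=
        Finset.sum_le_card_nsmul _ _ 2
          (fun f hf => claim2 f (by simpa using (Finset.mem_filter.mp hf).2))
      _ ≤ (Finset.univ : Finset (Fin k → Fin q)).card * 2 := by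
          rw [smul_eq_mul]
          exact Nat.mul_le_mul_right 2 (Finset.card_le_card (Finset.filter_subset _ _))
      _ = 2 * q ^ k := by
          rw [Finset.card_univ, Fintype.card_fun, Fintype.card_fin, Fintype.card_fin]; ring
  have hsum2 : ∑ p ∈ Finset.Icc 1 m, q ^ p ≤ m * q ^ m := by
    calc ∑ p ∈ Finset.Icc 1 m, q ^ p
        ≤ (Finset.Icc 1 m).card • q ^ m := by
          apply Finset.sum_le_card_nsmul
          intro p hp
          rw [Finset.mem_Icc] at hp
          exact Nat.pow_le_pow_right (by omega) hp.2
      _ = m * q ^ m := by rw [smul_eq_mul, Nat.card_Icc, Nat.add_sub_cancel]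
  have hNle : N ≤ 2 * q ^ k + k * (m * q ^ m) := by
    have e : N = ∑ f ∈ Finset.univ.filter (fun f : Fin k → Fin q => Stmt3Aux.SmallPer k f), (T f).card
        + ∑ f ∈ Finset.univ.filter (fun f : Fin k → Fin q => ¬ Stmt3Aux.SmallPer k f), (T f).card := by
      rw [hNsum]; exact hsplit.symm
    calc N = _ := e
      _ ≤ k * (∑ p ∈ Finset.Icc 1 m, q ^ p) + 2 * q ^ k := Nat.add_le_add hb1 hb2
      _ ≤ k * (m * q ^ m) + 2 * q ^ k :=
          Nat.add_le_add_right (Nat.mul_le_mul_left k hsum2) _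
      _ = 2 * q ^ k + k * (m * q ^ m) := Nat.add_comm _ _
  have hNr : ((N : ℕ) : ℝ) = (n : ℝ) - k + 1 := by
    have e : (N : ℝ) = ((n - k : ℕ) : ℝ) + 1 := by rw [hN]; push_cast; ring
    rw [e, Nat.cast_sub (by omega)]
  have hcast : ((2 * q ^ k + k * (m * q ^ m) : ℕ) : ℝ)
      = 2 * (q:ℝ)^k + (k:ℝ) * ((m:ℝ) * (q:ℝ)^m) := by push_cast; ring
  have hmr : (m : ℝ) ≤ (k : ℝ) / 2 := by
    rw [hmdef]
    exact_mod_cast Nat.cast_div_le (α := ℝ) (m := k) (n := 2)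
  have hqm : (q:ℝ) ^ m ≤ (q:ℝ) ^ ((k:ℝ)/2) := by
    rw [← Real.rpow_natCast (q:ℝ) m]
    exact Real.rpow_le_rpow_of_exponent_le hq1 hmr
  have hfinal : ((N:ℕ) : ℝ) ≤ 2*(q:ℝ)^k + ((k:ℝ)^2/2) * (q:ℝ)^((k:ℝ)/2) := by
    have h1 : ((N:ℕ) : ℝ) ≤ 2 * (q:ℝ)^k + (k:ℝ) * ((m:ℝ) * (q:ℝ)^m) := by
      rw [← hcast]; exact_mod_cast hNle
    have h2 : (m:ℝ) * (q:ℝ)^m ≤ ((k:ℝ)/2) * (q:ℝ)^((k:ℝ)/2) := by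
      apply mul_le_mul hmr hqm (by positivity) (by positivity)
    have h3 : (k:ℝ) * ((m:ℝ) * (q:ℝ)^m) ≤ (k:ℝ) * (((k:ℝ)/2) * (q:ℝ)^((k:ℝ)/2)) :=
      mul_le_mul_of_nonneg_left h2 (by positivity)
    have h4 : (k:ℝ) * (((k:ℝ)/2) * (q:ℝ)^((k:ℝ)/2)) = ((k:ℝ)^2/2) * (q:ℝ)^((k:ℝ)/2) := by ring
    linarith
  rw [hNr] at hfinal
  linarith
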